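/- For x > 0 and y > 0, the inequality (1/2)·log₂(1 + x) ≥ (1/2)·log₂(1 + x/2) + (1/2)·log₂(1 + (x/2)/(1+y)) holds if and only if y ≥ x/2. -/

import Mathlib

theorem fdm_ge_fs_iff (x y : ℝ) (hx : 0 < x) (hy : 0 < y) :
    (1/2) * Real.logb 2 (1 + x) ≥
        (1/2) * Real.logb 2 (1 + x/2) + (1/2) * Real.logb 2 (1 + (x/2)/(1+y))
      ↔ y ≥ x/2 := by
  have h1y : (0:ℝ) < 1 + y := by linarith
  have ha : (0:ℝ) < 1 + x := by linarith
  have hb : (0:ℝ) < 1 + x/2 := by linarith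
  have hc : (0:ℝ) < 1 + (x/2)/(1+y) := by positivity
  rw [ge_iff_le, ← mul_add, mul_le_mul_iff_right₀ (by norm_num : (0:ℝ) < 1/2),
      ← Real.logb_mul (ne_of_gt hb) (ne_of_gt hc),
      Real.logb_le_logb (by norm_num) (mul_pos hb hc) ha]
  constructor
  · intro h
    have h' : (1 + x/2) * (1 + (x/2)/(1+y)) * (1+y) ≤ (1+x) * (1+y) :=
      mul_le_mul_of_nonneg_right h (le_of_lt h1y)
    rw [ge_iff_le, div_le_iff₀ (by norm_num : (0:ℝ) < 2)]
    have e : (1 + x/2) * (1 + (x/2)/(1+y)) * (1+y)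
        = (1 + x/2) * ((1+y) + x/2) := by
      field_simp
    rw [e] at h'
    nlinarith
  · intro h
    rw [← sub_nonneg]
    have e : 1 + x - (1 + x/2) * (1 + (x/2)/(1+y))
        = (x * (2*y - x)) / (4 * (1+y)) := by
      field_simp; ring
    rw [e]
    have h2 : x ≤ 2 * y := by linarith [(div_le_iff₀ (by norm_num : (0:ℝ) < 2)).mp h]
    exact div_nonneg (by nlinarith) (by positivity)
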